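/- Let V, W be finite-dimensional inner product spaces and let 𝒜 : ℝⁿ \ {0} → Lin(V, W) be continuous and positively homogeneous of degree k (i.e. 𝒜(tξ) = t^k 𝒜(ξ) for t > 0). Suppose there is C > 0 with |ξ|^k ‖𝒜(ξ)* w‖ ≤ C ‖𝒜(ξ) 𝒜(ξ)* w‖ for all w ∈ W and ξ ≠ 0. Then rank(𝒜(ξ)) is constant on ℝⁿ \ {0} provided n ≥ 2. -/

import Mathlib

open Module LinearMap Metric Filter Topology Polynomial

/-- Orthogonal projection onto a submodule, as an endomorphism. -/
noncomputable def orthProj {E : Type*} [NormedAddCommGroup E] [InnerProductSpace ℝ E]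
    [FiniteDimensional ℝ E] (K : Submodule ℝ E) : E →L[ℝ] E :=
  K.subtypeL.comp K.orthogonalProjectionOnto

/-- `X` is the Moore–Penrose pseudoinverse of `A`: `A X = Proj_{im A}`,
`X A = Proj_{im A*}`, together with the normalization `X Proj_{im A} = X`
(i.e. `X` vanishes on `(im A)ᗮ`), which pins `X` down uniquely. -/
def IsMP {V W : Type*} [NormedAddCommGroup V] [InnerProductSpace ℝ V] [FiniteDimensional ℝ V]
    [NormedAddCommGroup W] [InnerProductSpace ℝ W] [FiniteDimensional ℝ W]
    (A : V →L[ℝ] W) (X : W →L[ℝ] V) : Prop :=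
  A ∘L X = orthProj (LinearMap.range (A : V →ₗ[ℝ] W)) ∧
  X ∘L A = orthProj (LinearMap.range (ContinuousLinearMap.adjoint A : W →ₗ[ℝ] V)) ∧
  X ∘L orthProj (LinearMap.range (A : V →ₗ[ℝ] W)) = X

set_option linter.unusedSectionVars false
set_option linter.unusedVariables false
set_option linter.deprecated false

section Aux
variable {V W : Type*} [NormedAddCommGroup V] [InnerProductSpace ℝ V] [FiniteDimensional ℝ V]
  [NormedAddCommGroup W] [InnerProductSpace ℝ W] [FiniteDimensional ℝ W]

/-- `ker A† = (range A)ᗮ`. -/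
lemma aux_ker_adjoint (A : V →L[ℝ] W) :
    LinearMap.ker (ContinuousLinearMap.adjoint A : W →ₗ[ℝ] V) = (LinearMap.range (A : V →ₗ[ℝ] W))ᗮ := by
  ext x
  simp only [LinearMap.mem_ker, Submodule.mem_orthogonal]
  constructor
  · rintro hx u ⟨v, rfl⟩
    have h := ContinuousLinearMap.adjoint_inner_left A (𝕜 := ℝ) v x
    rw [show (ContinuousLinearMap.adjoint A) x = 0 from hx] at h
    rw [real_inner_comm]
    simpa using h.symm
  · intro h
    have h2 : (inner ℝ (ContinuousLinearMap.adjoint A x) (ContinuousLinearMap.adjoint A x) : ℝ) = 0 := by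
      rw [ContinuousLinearMap.adjoint_inner_left A]
      rw [real_inner_comm]
      exact h _ ⟨_, rfl⟩
    exact inner_self_eq_zero.mp h2

lemma aux_range_comp_adjoint (A : V →L[ℝ] W) {w : W} (hw : w ∈ LinearMap.range (A : V →ₗ[ℝ] W)) :
    ∃ z : W, A (ContinuousLinearMap.adjoint A z) = w := by
  set B := ContinuousLinearMap.adjoint A with hB
  have hker : LinearMap.ker ((A ∘L B) : W →ₗ[ℝ] W) = LinearMap.ker (B : W →ₗ[ℝ] V) := by
    ext x
    simp only [LinearMap.mem_ker, ContinuousLinearMap.comp_apply]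
    constructor
    · intro hx
      have h1 : (inner ℝ (B x) (B x) : ℝ) = inner ℝ x (A (B x)) :=
        ContinuousLinearMap.adjoint_inner_left A (B x) x
      rw [show A (B x) = 0 from hx, inner_zero_right] at h1
      exact inner_self_eq_zero.mp h1
    · intro hx; show A (B x) = 0; rw [show B x = 0 from hx, map_zero]
  have hle : LinearMap.range ((A ∘L B) : W →ₗ[ℝ] W) ≤ LinearMap.range (A : V →ₗ[ℝ] W) := by
    rintro _ ⟨z, rfl⟩
    exact ⟨B z, rfl⟩
  have hrank : finrank ℝ (LinearMap.range ((A ∘L B) : W →ₗ[ℝ] W)) = finrank ℝ (LinearMap.range (A : V →ₗ[ℝ] W)) := by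
    have h1 := LinearMap.finrank_range_add_finrank_ker ((A ∘L B) : W →ₗ[ℝ] W)
    have h2 := Submodule.finrank_add_finrank_orthogonal (LinearMap.range (A : V →ₗ[ℝ] W))
    have h3 : LinearMap.ker ((A ∘L B) : W →ₗ[ℝ] W) = (LinearMap.range (A : V →ₗ[ℝ] W))ᗮ := by
      rw [show LinearMap.ker ((A ∘L B) : W →ₗ[ℝ] W) = LinearMap.ker ((A ∘L B) : W →ₗ[ℝ] W) from rfl, hker, hB,
        aux_ker_adjoint]
    rw [h3] at h1
    have h4 : LinearMap.range ((A ∘L B) : W →ₗ[ℝ] W) = LinearMap.range ((A ∘L B) : W →ₗ[ℝ] W) := rfl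
    rw [h4] at h1
    omega
  have heq : LinearMap.range ((A ∘L B) : W →ₗ[ℝ] W) = LinearMap.range (A : V →ₗ[ℝ] W) :=
    Submodule.eq_of_le_of_finrank_le hle hrank.ge
  rw [← heq] at hw
  obtain ⟨z, hz⟩ := hw
  exact ⟨z, hz⟩

/-- Lower semicontinuity of rank. -/
lemma aux_rank_lsc (A₀ : V →L[ℝ] W) :
    ∃ ε > (0:ℝ), ∀ A : V →L[ℝ] W, ‖A - A₀‖ < ε →
      finrank ℝ (LinearMap.range (A₀ : V →ₗ[ℝ] W)) ≤ finrank ℝ (LinearMap.range (A : V →ₗ[ℝ] W)) := by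
  set K := (LinearMap.ker (A₀ : V →ₗ[ℝ] W))ᗮ with hK
  set T₀ : K →ₗ[ℝ] W := (A₀ : V →ₗ[ℝ] W) ∘ₗ K.subtype with hT₀
  have hinj : LinearMap.ker T₀ = ⊥ := by
    rw [LinearMap.ker_eq_bot']
    rintro ⟨u, hu⟩ h
    have hu0 : u ∈ LinearMap.ker (A₀ : V →ₗ[ℝ] W) := by
      simpa [hT₀] using h
    have : u ∈ LinearMap.ker (A₀ : V →ₗ[ℝ] W) ⊓ (LinearMap.ker (A₀ : V →ₗ[ℝ] W))ᗮ := ⟨hu0, hu⟩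
    rw [Submodule.inf_orthogonal_eq_bot] at this
    exact Subtype.ext this
  obtain ⟨c, hc0, hc⟩ := T₀.exists_antilipschitzWith hinj
  refine ⟨(2 * c)⁻¹, by positivity, fun A hA => ?_⟩
  set T : K →ₗ[ℝ] W := (A : V →ₗ[ℝ] W) ∘ₗ K.subtype with hT
  have hTinj : Function.Injective T := by
    rw [← LinearMap.ker_eq_bot, LinearMap.ker_eq_bot']
    rintro ⟨u, hu⟩ h
    have hAu : A u = 0 := by simpa [hT] using h
    by_contra hne
    have hu_ne : u ≠ 0 := fun h0 => hne (by simp [h0])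
    have h1 : ‖u‖ ≤ c * ‖A₀ u‖ := by
      have := hc.le_mul_dist ⟨u, hu⟩ 0
      simpa [hT₀, dist_eq_norm] using this
    have h2 : ‖A₀ u‖ = ‖(A - A₀) u‖ := by
      simp [ContinuousLinearMap.sub_apply, hAu]
    have h3 : ‖(A - A₀) u‖ ≤ ‖A - A₀‖ * ‖u‖ := (A - A₀).le_opNorm u
    have h4 : ‖u‖ ≤ c * (‖A - A₀‖ * ‖u‖) := by
      calc ‖u‖ ≤ c * ‖A₀ u‖ := h1
        _ = c * ‖(A - A₀) u‖ := by rw [h2]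
        _ ≤ c * (‖A - A₀‖ * ‖u‖) := by
            exact mul_le_mul_of_nonneg_left h3 (le_of_lt (by exact_mod_cast hc0))
    have hu_pos : (0:ℝ) < ‖u‖ := norm_pos_iff.mpr hu_ne
    have hcp : (0:ℝ) < c := by exact_mod_cast hc0
    have h5 : ‖u‖ < c * ((2 * c)⁻¹ * ‖u‖) := by
      calc ‖u‖ ≤ c * (‖A - A₀‖ * ‖u‖) := h4
        _ < c * ((2 * c)⁻¹ * ‖u‖) := by
            apply mul_lt_mul_of_pos_left _ hcp
            exact mul_lt_mul_of_pos_right hA hu_pos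
    have : c * ((2 * c)⁻¹ * ‖u‖) = ‖u‖ / 2 := by
      push_cast
      field_simp
    rw [this] at h5
    linarith
  have hfr : finrank ℝ (LinearMap.range T) = finrank ℝ K := LinearMap.finrank_range_of_inj hTinj
  have hK_eq : finrank ℝ K = finrank ℝ (LinearMap.range (A₀ : V →ₗ[ℝ] W)) := by
    rw [hK]
    have h1 := LinearMap.finrank_range_add_finrank_ker (A₀ : V →ₗ[ℝ] W)
    have h2 := Submodule.finrank_add_finrank_orthogonal (LinearMap.ker (A₀ : V →ₗ[ℝ] W))
    have h3 : LinearMap.range ((A₀ : V →ₗ[ℝ] W)) = LinearMap.range (A₀ : V →ₗ[ℝ] W) := rfl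
    have h4 : LinearMap.ker ((A₀ : V →ₗ[ℝ] W)) = LinearMap.ker (A₀ : V →ₗ[ℝ] W) := rfl
    rw [h3, h4] at h1
    omega
  have hle : LinearMap.range T ≤ LinearMap.range (A : V →ₗ[ℝ] W) := by
    rintro _ ⟨⟨u, hu⟩, rfl⟩
    exact ⟨u, rfl⟩
  calc finrank ℝ (LinearMap.range (A₀ : V →ₗ[ℝ] W)) = finrank ℝ (LinearMap.range T) := by rw [hfr, hK_eq]
    _ ≤ finrank ℝ (LinearMap.range (A : V →ₗ[ℝ] W)) := Submodule.finrank_mono hle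

lemma aux_key {n : ℕ} (k : ℕ) (𝒜 : EuclideanSpace ℝ (Fin n) → (V →L[ℝ] W))
    (hcont : ContinuousOn 𝒜 {ξ | ξ ≠ 0})
    (C : ℝ) (hC : 0 < C)
    (hbound : ∀ (ξ : EuclideanSpace ℝ (Fin n)), ξ ≠ 0 → ∀ w : W,
      ‖ξ‖ ^ k * ‖ContinuousLinearMap.adjoint (𝒜 ξ) w‖ ≤
        C * ‖(𝒜 ξ) (ContinuousLinearMap.adjoint (𝒜 ξ) w)‖)
    (ξ₀ : EuclideanSpace ℝ (Fin n)) (hξ₀ : ξ₀ ≠ 0) :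
    ∀ᶠ ξ in 𝓝 ξ₀, ξ ≠ 0 →
      finrank ℝ (LinearMap.range (𝒜 ξ : V →ₗ[ℝ] W)) = finrank ℝ (LinearMap.range (𝒜 ξ₀ : V →ₗ[ℝ] W)) := by
  have hopen : IsOpen {ξ : EuclideanSpace ℝ (Fin n) | ξ ≠ 0} := isOpen_compl_singleton
  have hcA : ContinuousAt 𝒜 ξ₀ := hcont.continuousAt (hopen.mem_nhds hξ₀)
  set r := finrank ℝ (LinearMap.range (𝒜 ξ₀ : V →ₗ[ℝ] W)) with hr
  -- lower semicontinuity
  obtain ⟨ε, hε, hε2⟩ := aux_rank_lsc (𝒜 ξ₀)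
  have E1 : ∀ᶠ ξ in 𝓝 ξ₀, r ≤ finrank ℝ (LinearMap.range (𝒜 ξ : V →ₗ[ℝ] W)) := by
    have h := Metric.tendsto_nhds.mp hcA.tendsto ε hε
    filter_upwards [h] with ξ hξ
    exact hε2 _ (by rwa [dist_eq_norm] at hξ)
  -- upper semicontinuity
  have E2 : ∀ᶠ ξ in 𝓝 ξ₀, ξ ≠ 0 → finrank ℝ (LinearMap.range (𝒜 ξ : V →ₗ[ℝ] W)) ≤ r := by
    by_contra hcon
    rw [Filter.not_eventually] at hcon
    have hnorm : ∀ᶠ ξ in 𝓝 ξ₀, ‖ξ₀‖ / 2 < ‖ξ‖ := by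
      have ht : Filter.Tendsto (fun ξ : EuclideanSpace ℝ (Fin n) => ‖ξ‖) (𝓝 ξ₀) (𝓝 ‖ξ₀‖) :=
        (continuous_norm.tendsto ξ₀)
      exact ht.eventually_const_lt (by
        have : (0:ℝ) < ‖ξ₀‖ := norm_pos_iff.mpr hξ₀
        linarith)
    have hfreq : ∃ᶠ ξ in 𝓝 ξ₀, (ξ ≠ 0 ∧ ‖ξ₀‖ / 2 < ‖ξ‖) ∧
        r + 1 ≤ finrank ℝ (LinearMap.range (𝒜 ξ : V →ₗ[ℝ] W)) := by
      refine (hcon.and_eventually hnorm).mono fun ξ h => ?_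
      obtain ⟨h1, h2⟩ := h
      push_neg at h1
      exact ⟨⟨h1.1, h2⟩, h1.2⟩
    obtain ⟨u, hu_tendsto, hu⟩ := frequently_iff_seq_forall.mp hfreq
    have hune : ∀ j, u j ≠ 0 := fun j => (hu j).1.1
    -- pick unit vectors in range (𝒜 (u j)) ⊓ (range (𝒜 ξ₀))ᗮ
    set R₀ := LinearMap.range (𝒜 ξ₀ : V →ₗ[ℝ] W) with hR₀
    have hw_ex : ∀ j, ∃ w : W, ‖w‖ = 1 ∧ w ∈ LinearMap.range (𝒜 (u j) : V →ₗ[ℝ] W) ∧ w ∈ R₀ᗮ := by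
      intro j
      set Rj := LinearMap.range (𝒜 (u j) : V →ₗ[ℝ] W) with hRj
      have hdim := Submodule.finrank_sup_add_finrank_inf_eq Rj R₀ᗮ
      have h1 : finrank ℝ (Rj ⊔ R₀ᗮ : Submodule ℝ W) ≤ finrank ℝ W := Submodule.finrank_le _
      have h2 : r + 1 ≤ finrank ℝ Rj := (hu j).2
      have h3 := Submodule.finrank_add_finrank_orthogonal R₀
      have h4 : finrank ℝ R₀ = r := rfl
      have hpos : 0 < finrank ℝ (Rj ⊓ R₀ᗮ : Submodule ℝ W) := by omega
      have hne : (Rj ⊓ R₀ᗮ : Submodule ℝ W) ≠ ⊥ := by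
        intro hbot
        rw [hbot, finrank_bot] at hpos
        exact lt_irrefl 0 hpos
      obtain ⟨x, hx_mem, hx_ne⟩ := Submodule.exists_mem_ne_zero_of_ne_bot hne
      refine ⟨‖x‖⁻¹ • x, ?_, ?_, ?_⟩
      · rw [norm_smul, norm_inv, norm_norm,
          inv_mul_cancel₀ (norm_ne_zero_iff.mpr hx_ne)]
      · exact Submodule.smul_mem _ _ hx_mem.1
      · exact Submodule.smul_mem _ _ hx_mem.2
    choose w hw1 hw2 hw3 using hw_ex
    -- bounded preimages
    set δ := (‖ξ₀‖ / 2) ^ k with hδ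
    have hδpos : 0 < δ := by
      apply pow_pos
      have : (0:ℝ) < ‖ξ₀‖ := norm_pos_iff.mpr hξ₀
      linarith
    have hv_ex : ∀ j, ∃ v : V, (𝒜 (u j)) v = w j ∧ ‖v‖ ≤ C / δ := by
      intro j
      obtain ⟨z, hz⟩ := aux_range_comp_adjoint (𝒜 (u j)) (hw2 j)
      refine ⟨ContinuousLinearMap.adjoint (𝒜 (u j)) z, hz, ?_⟩
      have hb := hbound (u j) (hune j) z
      rw [hz, hw1 j, mul_one] at hb
      have hpow : δ ≤ ‖u j‖ ^ k := by
        apply pow_le_pow_left₀ (by positivity)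
        exact le_of_lt (hu j).1.2
      have : δ * ‖ContinuousLinearMap.adjoint (𝒜 (u j)) z‖ ≤ C := by
        calc δ * ‖ContinuousLinearMap.adjoint (𝒜 (u j)) z‖
            ≤ ‖u j‖ ^ k * ‖ContinuousLinearMap.adjoint (𝒜 (u j)) z‖ := by
              apply mul_le_mul_of_nonneg_right hpow (norm_nonneg _)
          _ ≤ C := hb
      rw [le_div_iff₀ hδpos, mul_comm]
      linarith [this]
    choose v hv1 hv2 using hv_ex
    -- compactness
    set M := max (C / δ) 1 with hM
    have hmem : ∀ j, (v j, w j) ∈ closedBall (0 : V × W) M := by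
      intro j
      rw [mem_closedBall_zero_iff, Prod.norm_def]
      exact max_le ((hv2 j).trans (le_max_left _ _)) (by rw [hw1 j]; exact le_max_right _ _)
    obtain ⟨q, -, φ, hφ, hconv⟩ :=
      tendsto_subseq_of_bounded (isBounded_closedBall (x := (0 : V × W)) (r := M)) hmem
    have hv_conv : Tendsto (fun j => v (φ j)) atTop (𝓝 q.1) :=
      (continuous_fst.tendsto q).comp hconv
    have hw_conv : Tendsto (fun j => w (φ j)) atTop (𝓝 q.2) :=
      (continuous_snd.tendsto q).comp hconv
    have hA_conv : Tendsto (fun j => 𝒜 (u (φ j))) atTop (𝓝 (𝒜 ξ₀)) :=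
      hcA.tendsto.comp (hu_tendsto.comp hφ.tendsto_atTop)
    have happ : Tendsto (fun j => (𝒜 (u (φ j))) (v (φ j))) atTop (𝓝 ((𝒜 ξ₀) q.1)) := by
      have hcontapp : Continuous fun p : (V →L[ℝ] W) × V => p.1 p.2 :=
        isBoundedBilinearMap_apply.continuous
      exact (hcontapp.tendsto (𝒜 ξ₀, q.1)).comp (hA_conv.prodMk_nhds hv_conv)
    have heqw : (fun j => (𝒜 (u (φ j))) (v (φ j))) = fun j => w (φ j) := by
      funext j; exact hv1 (φ j)
    rw [heqw] at happ
    have hq2 : q.2 = (𝒜 ξ₀) q.1 := tendsto_nhds_unique hw_conv happ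
    have hq2_norm : ‖q.2‖ = 1 := by
      have h1 : Tendsto (fun j => ‖w (φ j)‖) atTop (𝓝 ‖q.2‖) := hw_conv.norm
      have h2 : Tendsto (fun j => ‖w (φ j)‖) atTop (𝓝 1) := by
        simp only [hw1]; exact tendsto_const_nhds
      exact tendsto_nhds_unique h1 h2
    have hq2_orth : q.2 ∈ R₀ᗮ := by
      have hcl : IsClosed ((R₀ᗮ : Submodule ℝ W) : Set W) :=
        Submodule.closed_of_finiteDimensional _
      exact hcl.mem_of_tendsto hw_conv (Filter.Eventually.of_forall fun j => hw3 (φ j))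
    have hq2_mem : q.2 ∈ R₀ := by rw [hq2]; exact ⟨q.1, rfl⟩
    have : q.2 ∈ (R₀ ⊓ R₀ᗮ : Submodule ℝ W) := ⟨hq2_mem, hq2_orth⟩
    rw [Submodule.inf_orthogonal_eq_bot, Submodule.mem_bot] at this
    rw [this, norm_zero] at hq2_norm
    exact one_ne_zero hq2_norm.symm
  filter_upwards [E1, E2] with ξ h1 h2
  intro hne
  exact le_antisymm (h2 hne) h1

end Aux

/-- If `𝒜` is continuous, positively `k`-homogeneous on `ℝⁿ \ {0}` (`n ≥ 2`) and satisfies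
`|ξ|^k ‖𝒜(ξ)* w‖ ≤ C ‖𝒜(ξ) 𝒜(ξ)* w‖`, then `𝒜` has constant rank on `ℝⁿ \ {0}`. -/
theorem constant_rank_of_symbol_bound
    {V W : Type*} [NormedAddCommGroup V] [InnerProductSpace ℝ V] [FiniteDimensional ℝ V]
    [NormedAddCommGroup W] [InnerProductSpace ℝ W] [FiniteDimensional ℝ W]
    {n : ℕ} (hn : 2 ≤ n) (k : ℕ)
    (𝒜 : EuclideanSpace ℝ (Fin n) → (V →L[ℝ] W))
    (hcont : ContinuousOn 𝒜 {ξ | ξ ≠ 0})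
    (hhom : ∀ t : ℝ, 0 < t → ∀ ξ : EuclideanSpace ℝ (Fin n), ξ ≠ 0 →
      𝒜 (t • ξ) = t ^ k • 𝒜 ξ)
    (C : ℝ) (hC : 0 < C)
    (hbound : ∀ (ξ : EuclideanSpace ℝ (Fin n)), ξ ≠ 0 → ∀ w : W,
      ‖ξ‖ ^ k * ‖ContinuousLinearMap.adjoint (𝒜 ξ) w‖ ≤
        C * ‖(𝒜 ξ) (ContinuousLinearMap.adjoint (𝒜 ξ) w)‖) :
    ∀ (ξ₁ ξ₂ : EuclideanSpace ℝ (Fin n)), ξ₁ ≠ 0 → ξ₂ ≠ 0 →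
      finrank ℝ (LinearMap.range (𝒜 ξ₁ : V →ₗ[ℝ] W)) = finrank ℝ (LinearMap.range (𝒜 ξ₂ : V →ₗ[ℝ] W)) := by
  intro ξ₁ ξ₂ h₁ h₂
  set U : Set (EuclideanSpace ℝ (Fin n)) := {ξ | ξ ≠ 0} with hU
  have hUpc : IsPreconnected U := by
    have hrank : 1 < Module.rank ℝ (EuclideanSpace ℝ (Fin n)) := by
      rw [← Module.finrank_eq_rank, finrank_euclideanSpace]
      simp only [Fintype.card_fin]
      exact_mod_cast hn
    have hpath := isPathConnected_compl_singleton_of_one_lt_rank hrank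
      (0 : EuclideanSpace ℝ (Fin n))
    have hUeq : U = ({0}ᶜ : Set (EuclideanSpace ℝ (Fin n))) := by
      ext ξ; simp [hU]
    rw [hUeq]
    exact hpath.isConnected.isPreconnected
  have hf : ContinuousOn (fun ξ => finrank ℝ (LinearMap.range (𝒜 ξ : V →ₗ[ℝ] W))) U := by
    intro ξ hξ
    have hev := aux_key k 𝒜 hcont C hC hbound ξ hξ
    have hev' : ∀ᶠ ξ' in 𝓝[U] ξ,
        finrank ℝ (LinearMap.range (𝒜 ξ' : V →ₗ[ℝ] W)) = finrank ℝ (LinearMap.range (𝒜 ξ : V →ₗ[ℝ] W)) := by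
      filter_upwards [nhdsWithin_le_nhds hev, self_mem_nhdsWithin] with ξ' h hmem
      exact h hmem
    exact continuousWithinAt_const.congr_of_eventuallyEq hev' rfl
  exact hUpc.constant hf h₁ h₂
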